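/- Given a finite list Ps of static program over-approximations (the i-th over identifiers OId_i), applying the flow-sensitive residual construction consecutively — residual₂(D, ⟨⟩) = D and residual₂(D, P:Ps) = residual₂(residual₂(D, P), Ps) — yields a DATE equivalent to the original D with respect to the intersection of the projections of the approximations onto ground traces: residual₂(D, Ps) ≅_{⋂_{0 ≤ i < length(Ps)} Ps(i) ⇓ OId_i} D. -/
import Mathlib


open Classical

/-- A property automaton over states `Q` and alphabet `E`: a deterministic and
total transition relation is represented as a transition function. -/
structure PA (Q : Type*) (E : Type*) where
  init : Q
  bad : Set Q
  next : Q → E → Q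

namespace PA

variable {Q E : Type*}

/-- Iterated application of the transition function along a ground trace. -/
def run (π : PA Q E) (q : Q) (t : List E) : Q := t.foldl π.next q

/-- A ground trace satisfies a property automaton iff no prefix of it leads
from the initial state to a bad state. -/
def Sat (t : List E) (π : PA Q E) : Prop :=
  ∀ t' : List E, t' <+: t → π.run π.init t' ∉ π.bad

/-- Equivalence of two property automata with respect to a set of ground traces. -/
def EquivOn (T : Set (List E)) (π π' : PA Q E) : Prop :=
  ∀ t ∈ T, Sat t π ↔ Sat t π'

end PA

/-- A static program: a set of static parametrised traces over identifiers `α`,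
together with a must-alias equivalence relation and a may-alias relation. -/
structure SProg (α : Type*) (E : Type*) where
  traces : Set (List (α × E))
  must : α → α → Prop
  may : α → α → Prop
  must_equiv : Equivalence must
  must_sub_may : ∀ {x y : α}, must x y → may x y

namespace SProg

variable {α E : Type*}

-- Projection of a static parametrised trace onto an identifier `x`,
-- yielding the set of possible ground traces.
open Classical in
noncomputable def proj (P : SProg α E) (x : α) : List (α × E) → Set (List E)
  | [] => {[]}
  | (x', e) :: st =>
      if P.must x x' then (e :: ·) '' P.proj x st
      else if P.may x x' then P.proj x st ∪ (e :: ·) '' P.proj x st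
      else P.proj x st

/-- The projection of a static program onto a single identifier. -/
def projId (P : SProg α E) (x : α) : Set (List E) :=
  {t | ∃ st ∈ P.traces, t ∈ P.proj x st}

/-- The projection of a static program onto all identifiers (`P ⇓ OId`). -/
def projAll (P : SProg α E) : Set (List E) :=
  {t | ∃ st ∈ P.traces, ∃ x : α, t ∈ P.proj x st}

end SProg

/-- Satisfaction of a property automaton by a static parametrised trace:
every projection onto every identifier satisfies the automaton. -/
def PA.SSat {α Q E : Type*} (P : SProg α E) (st : List (α × E)) (π : PA Q E) : Prop :=
  ∀ x : α, ∀ t ∈ P.proj x st, PA.Sat t π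

/-- Equivalence of two property automata with respect to a static program. -/
def PA.SEquiv {α Q E : Type*} (P : SProg α E) (π π' : PA Q E) : Prop :=
  ∀ st ∈ P.traces, PA.SSat P st π ↔ PA.SSat P st π'

/-- A transition of a DATE: source state, event, condition, action, target state. -/
structure DTrans (Q : Type*) (E : Type*) (Θ : Type*) where
  src : Q
  ev : E
  cond : Θ → Bool
  act : Θ → Θ
  tgt : Q

/-- A DATE (without timers/channels): states `Q`, events `E`, monitoring
variable states `Θ`, initial state, initial monitoring state, bad states,
and a transition relation. -/
structure DATE (Q : Type*) (E : Type*) (Θ : Type*) where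
  init : Q
  th0 : Θ
  bad : Set Q
  delta : Set (DTrans Q E Θ)

namespace DATE

variable {Q E Θ : Type*}

/-- Determinism: from each state, any two distinct transitions with the same
event have conditions that are never simultaneously true. -/
def Deterministic (D : DATE Q E Θ) : Prop :=
  ∀ d ∈ D.delta, ∀ d' ∈ D.delta,
    d.src = d'.src → d.ev = d'.ev → d ≠ d' →
      ∀ θ : Θ, ¬(d.cond θ = true ∧ d'.cond θ = true)

/-- The concrete transition function `Δ`. -/
noncomputable def step (D : DATE Q E Θ) (s : Q × Θ) (e : E) : Q × Θ :=
  if h : ∃ d ∈ D.delta, d.src = s.1 ∧ d.ev = e ∧ d.cond s.2 = true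
  then (h.choose.tgt, h.choose.act s.2)
  else s

/-- `Δ*`: iterated concrete transition function along a ground trace. -/
noncomputable def run (D : DATE Q E Θ) (s : Q × Θ) (t : List E) : Q × Θ :=
  t.foldl D.step s

/-- A ground trace satisfies a DATE iff no prefix of it drives `Δ*` from the
initial configuration into a bad state. -/
def Sat (t : List E) (D : DATE Q E Θ) : Prop :=
  ∀ t' : List E, t' <+: t → (D.run (D.init, D.th0) t').1 ∉ D.bad

/-- Equivalence of two DATEs with respect to a set of ground traces. -/
def EquivOn (T : Set (List E)) (D D' : DATE Q E Θ) : Prop :=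
  ∀ t ∈ T, Sat t D ↔ Sat t D'

/-- The static transition relation `q →e_approx q'`. -/
def ApproxStep (D : DATE Q E Θ) (q : Q) (e : E) (q' : Q) : Prop :=
  (∃ d ∈ D.delta, d.src = q ∧ d.ev = e ∧ d.tgt = q' ∧ ¬ ∀ θ : Θ, d.cond θ = false)
  ∨ (q' = q ∧ ¬ ∃ d ∈ D.delta, d.src = q ∧ d.ev = e ∧ d.tgt ≠ q ∧ ∀ θ : Θ, d.cond θ = true)

/-- The static transition function on sets of states. -/
def approxSet (D : DATE Q E Θ) (S : Set Q) (e : E) : Set Q :=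
  {q' | ∃ q ∈ S, D.ApproxStep q e q'}

/-- `approxΔ*`: iterated static transition function along a ground trace. -/
def approxRun (D : DATE Q E Θ) (S : Set Q) (t : List E) : Set Q :=
  t.foldl D.approxSet S

/-- `q ↪ q'`: `q'` is reachable from `q` via the static transition relation. -/
def Reach (D : DATE Q E Θ) (q q' : Q) : Prop :=
  ∃ t : List E, q' ∈ D.approxRun {q} t

/-- `badAfter(q)`: `q` is reachable from the initial state and can reach a bad state. -/
def BadAfter (D : DATE Q E Θ) (q : Q) : Prop :=
  D.Reach D.init q ∧ ∃ q' ∈ D.bad, D.Reach q q'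

/-- `goodEntryPoint(q)`. -/
def GoodEntryPoint (D : DATE Q E Θ) (q : Q) : Prop :=
  ¬ D.BadAfter q ∧ ∃ q' : Q, ∃ e : E, D.BadAfter q' ∧ D.ApproxStep q' e q

/-- `useful(q)`. -/
def Useful (D : DATE Q E Θ) (q : Q) : Prop :=
  D.BadAfter q ∨ D.GoodEntryPoint q

/-- Restriction of a DATE to a set of transitions (`D ↾ δ'`). -/
def restrict (D : DATE Q E Θ) (δ' : Set (DTrans Q E Θ)) : DATE Q E Θ :=
  { D with delta := D.delta ∩ δ' }

/-- The reachability-reduced DATE `reach(D)`: only useful states and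
transitions between useful states are kept. -/
def reachReduce (D : DATE Q E Θ) : DATE Q E Θ :=
  D.restrict {d | D.Useful d.src ∧ D.Useful d.tgt}

/-- Alphabet restriction `D ↾ Σ'`. -/
def alphaRestrict (D : DATE Q E Θ) (A : Set E) : DATE Q E Θ :=
  D.restrict {d | d.ev ∈ A}

/-- `Σ(T)`: the set of events occurring in some trace of `T`. -/
def eventsOf (T : Set (List E)) : Set E :=
  {e | ∃ t ∈ T, e ∈ t}

/-- Component-wise union of two DATEs (sharing initial state and initial
monitoring state). -/
def union (D₁ D₂ : DATE Q E Θ) : DATE Q E Θ :=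
  { init := D₁.init, th0 := D₁.th0, bad := D₁.bad ∪ D₂.bad,
    delta := D₁.delta ∪ D₂.delta }

/-- Component-wise union of a family of DATEs, with given initial state and
initial monitoring state. -/
def unionFamily {ι : Type*} (q0 : Q) (θ0 : Θ) (f : ι → DATE Q E Θ) : DATE Q E Θ :=
  { init := q0, th0 := θ0, bad := ⋃ i, (f i).bad, delta := ⋃ i, (f i).delta }

/-- A ground trace `t` uses a transition `d`. -/
def Uses (D : DATE Q E Θ) (t : List E) (d : DTrans Q E Θ) : Prop :=
  (¬ ∀ θ : Θ, d.cond θ = false) ∧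
    ∃ t' : List E, (t' ++ [d.ev]) <+: t ∧ d.src ∈ D.approxRun {D.init} t'

/-- Satisfaction of a DATE by a static parametrised trace. -/
def SSat {α : Type*} (P : SProg α E) (st : List (α × E)) (D : DATE Q E Θ) : Prop :=
  ∀ x : α, ∀ t ∈ P.proj x st, Sat t D

/-- Equivalence of two DATEs with respect to a static program. -/
def SEquiv {α : Type*} (P : SProg α E) (D D' : DATE Q E Θ) : Prop :=
  ∀ st ∈ P.traces, SSat P st D ↔ SSat P st D'

end DATE

/-- Translation of a property automaton into a DATE with `Θ = Unit`:
each transition `(q, e, q')` becomes `q —e|true↦skip→ q'`. -/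
def PA.toDATE {Q E : Type*} (π : PA Q E) : DATE Q E Unit :=
  { init := π.init, th0 := (), bad := π.bad,
    delta := {d | d.cond = (fun _ => true) ∧ d.act = id ∧ d.tgt = π.next d.src d.ev} }

/-- The flow-sensitive residual `residual₂(D, P)`. -/
def DATE.residual2 {α Q E Θ : Type*} (D : DATE Q E Θ) (P : SProg α E) : DATE Q E Θ :=
  (D.restrict {d | ∃ t ∈ P.projAll, D.Uses t d}).reachReduce

/-- Consecutive application of the flow-sensitive residual over a list of
static program over-approximations. -/
def DATE.residual2List {α Q E Θ : Type*} (D : DATE Q E Θ) :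
    List (SProg α E) → DATE Q E Θ
  | [] => D
  | P :: Ps => DATE.residual2List (D.residual2 P) Ps

section Aux

variable {Q E Θ : Type*}

namespace DATE

lemma det_of_subset {D D' : DATE Q E Θ} (hsub : D'.delta ⊆ D.delta)
    (hdet : D.Deterministic) : D'.Deterministic :=
  fun d hd d' hd' h1 h2 h3 θ => hdet d (hsub hd) d' (hsub hd') h1 h2 h3 θ

lemma run_nil (D : DATE Q E Θ) (s : Q × Θ) : D.run s [] = s := rfl

lemma run_cons (D : DATE Q E Θ) (s : Q × Θ) (e : E) (t : List E) :
    D.run s (e :: t) = D.run (D.step s e) t := rfl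

lemma run_concat (D : DATE Q E Θ) (s : Q × Θ) (t : List E) (e : E) :
    D.run s (t ++ [e]) = D.step (D.run s t) e := by
  simp [DATE.run, List.foldl_append]

lemma run_append (D : DATE Q E Θ) (s : Q × Θ) (t t' : List E) :
    D.run s (t ++ t') = D.run (D.run s t) t' := by
  simp [DATE.run, List.foldl_append]

lemma approxRun_nil (D : DATE Q E Θ) (S : Set Q) : D.approxRun S [] = S := rfl

lemma approxRun_cons (D : DATE Q E Θ) (S : Set Q) (e : E) (t : List E) :
    D.approxRun S (e :: t) = D.approxRun (D.approxSet S e) t := rfl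

lemma approxRun_mono (D : DATE Q E Θ) :
    ∀ (t : List E) {S S' : Set Q}, S ⊆ S' → D.approxRun S t ⊆ D.approxRun S' t := by
  intro t
  induction t with
  | nil => intro S S' h; exact h
  | cons e t ih =>
      intro S S' h
      rw [approxRun_cons, approxRun_cons]
      exact ih (fun q' hq' => by
        obtain ⟨q, hq, hstep⟩ := hq'
        exact ⟨q, h hq, hstep⟩)

lemma reach_refl (D : DATE Q E Θ) (q : Q) : D.Reach q q :=
  ⟨[], rfl⟩

lemma reach_single {D : DATE Q E Θ} {q q' : Q} {e : E}
    (h : D.ApproxStep q e q') : D.Reach q q' :=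
  ⟨[e], ⟨q, rfl, h⟩⟩

lemma reach_trans {D : DATE Q E Θ} {q q' q'' : Q}
    (h1 : D.Reach q q') (h2 : D.Reach q' q'') : D.Reach q q'' := by
  obtain ⟨t1, m1⟩ := h1
  obtain ⟨t2, m2⟩ := h2
  refine ⟨t1 ++ t2, ?_⟩
  have : D.approxRun {q'} t2 ⊆ D.approxRun (D.approxRun {q} t1) t2 :=
    D.approxRun_mono t2 (by simpa using m1)
  simpa [DATE.approxRun, List.foldl_append] using this m2

lemma approxStep_of_step (D : DATE Q E Θ) (s : Q × Θ) (e : E) :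
    D.ApproxStep s.1 e (D.step s e).1 := by
  unfold DATE.step
  by_cases h : ∃ d ∈ D.delta, d.src = s.1 ∧ d.ev = e ∧ d.cond s.2 = true
  · rw [dif_pos h]
    obtain ⟨hd, hsrc, hev, hcond⟩ := h.choose_spec
    exact Or.inl ⟨h.choose, hd, hsrc, hev, rfl, fun hall => by
      rw [hall s.2] at hcond; exact Bool.false_ne_true hcond⟩
  · rw [dif_neg h]
    exact Or.inr ⟨rfl, fun ⟨d, hd, hsrc, hev, _, hall⟩ => h ⟨d, hd, hsrc, hev, hall s.2⟩⟩

lemma run_fst_mem_approxRun (D : DATE Q E Θ) :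
    ∀ (t : List E) (S : Set Q) (s : Q × Θ), s.1 ∈ S →
      (D.run s t).1 ∈ D.approxRun S t := by
  intro t
  induction t with
  | nil => intro S s hs; exact hs
  | cons e t ih =>
      intro S s hs
      rw [run_cons, approxRun_cons]
      exact ih _ _ ⟨s.1, hs, D.approxStep_of_step s e⟩

lemma reach_run_fst {D D' : DATE Q E Θ} (hsub : D'.delta ⊆ D.delta) :
    ∀ (t : List E) (s : Q × Θ), D.Reach s.1 (D'.run s t).1 := by
  intro t
  induction t with
  | nil => intro s; exact D.reach_refl s.1
  | cons e t ih =>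
      intro s
      rw [run_cons]
      refine reach_trans ?_ (ih (D'.step s e))
      unfold DATE.step
      by_cases h : ∃ d ∈ D'.delta, d.src = s.1 ∧ d.ev = e ∧ d.cond s.2 = true
      · rw [dif_pos h]
        obtain ⟨hd, hsrc, hev, hcond⟩ := h.choose_spec
        exact reach_single (Or.inl ⟨h.choose, hsub hd, hsrc, hev, rfl, fun hall => by
          rw [hall s.2] at hcond; exact Bool.false_ne_true hcond⟩)
      · rw [dif_neg h]
        exact D.reach_refl s.1

lemma step_eq_of_keep {D D' : DATE Q E Θ} (hdet : D.Deterministic)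
    (hsub : D'.delta ⊆ D.delta) (s : Q × Θ) (e : E)
    (hkeep : ∀ d ∈ D.delta, d.src = s.1 → d.ev = e → d.cond s.2 = true → d ∈ D'.delta) :
    D'.step s e = D.step s e := by
  unfold DATE.step
  by_cases h : ∃ d ∈ D.delta, d.src = s.1 ∧ d.ev = e ∧ d.cond s.2 = true
  · obtain ⟨hd, hsrc, hev, hcond⟩ := h.choose_spec
    have h' : ∃ d ∈ D'.delta, d.src = s.1 ∧ d.ev = e ∧ d.cond s.2 = true :=
      ⟨h.choose, hkeep _ hd hsrc hev hcond, hsrc, hev, hcond⟩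
    rw [dif_pos h, dif_pos h']
    obtain ⟨hd', hsrc', hev', hcond'⟩ := h'.choose_spec
    have heq : h'.choose = h.choose := by
      by_contra hne
      exact hdet _ (hsub hd') _ hd (hsrc'.trans hsrc.symm) (hev'.trans hev.symm) hne s.2
        ⟨hcond', hcond⟩
    rw [heq]
  · have h' : ¬ ∃ d ∈ D'.delta, d.src = s.1 ∧ d.ev = e ∧ d.cond s.2 = true :=
      fun ⟨d, hd, hp⟩ => h ⟨d, hsub hd, hp⟩
    rw [dif_neg h, dif_neg h']

/-- Restricting to transitions used by some trace of `P ⇓ OId` does not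
change the concrete run on prefixes of a trace `t ∈ P ⇓ OId`. -/
lemma restrictUses_run_eq {α : Type*} {D : DATE Q E Θ} (hdet : D.Deterministic)
    {P : SProg α E} {t : List E} (ht : t ∈ P.projAll) :
    ∀ t' : List E, t' <+: t →
      (D.restrict {d | ∃ u ∈ P.projAll, D.Uses u d}).run (D.init, D.th0) t'
        = D.run (D.init, D.th0) t' := by
  intro t'
  induction t' using List.reverseRecOn with
  | nil => intro _; rfl
  | append_singleton tk e ih =>
      intro hpre
      have htk : tk <+: t := (List.prefix_append tk [e]).trans hpre
      rw [run_concat, run_concat, ih htk]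
      refine step_eq_of_keep hdet Set.inter_subset_left _ _ ?_
      intro d hd hsrc hev hcond
      refine ⟨hd, t, ht, ?_, tk, by rw [hev]; exact hpre, ?_⟩
      · intro hall; rw [hall] at hcond; exact Bool.false_ne_true hcond
      · rw [hsrc]
        exact D.run_fst_mem_approxRun tk {D.init} _ rfl

/-- Reachability reduction preserves satisfaction of every ground trace
(for deterministic DATEs). -/
lemma reachReduce_sat_iff {D : DATE Q E Θ} (hdet : D.Deterministic) (t : List E) :
    DATE.Sat t D.reachReduce ↔ DATE.Sat t D := by
  classical
  set D₂ := D.reachReduce with hD₂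
  have hsub : D₂.delta ⊆ D.delta := Set.inter_subset_left
  have hinit : D₂.init = D.init := rfl
  have hth0 : D₂.th0 = D.th0 := rfl
  have hbad : D₂.bad = D.bad := rfl
  by_cases hall : ∀ t' : List E, t' <+: t →
      D₂.run (D.init, D.th0) t' = D.run (D.init, D.th0) t'
  · constructor <;> intro h t' ht'
    · have := h t' ht'
      rw [hinit, hth0, hall t' ht'] at this
      exact this
    · have := h t' ht'
      rw [hinit, hth0, hall t' ht']
      exact this
  · push_neg at hall
    -- a minimal-length divergence prefix
    have hex : ∃ n : ℕ, ∃ t' : List E, t' <+: t ∧ t'.length = n ∧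
        D₂.run (D.init, D.th0) t' ≠ D.run (D.init, D.th0) t' := by
      obtain ⟨t', h1, h2⟩ := hall
      exact ⟨t'.length, t', h1, rfl, h2⟩
    obtain ⟨t₁, hpre₁, hlen₁, hne₁⟩ := Nat.find_spec hex
    have hmin : ∀ t'' : List E, t'' <+: t → t''.length < Nat.find hex →
        D₂.run (D.init, D.th0) t'' = D.run (D.init, D.th0) t'' := by
      intro t'' h1 h2
      by_contra h3
      exact Nat.find_min hex h2 ⟨t'', h1, rfl, h3⟩
    -- t₁ is nonempty
    rcases List.eq_nil_or_concat t₁ with hnil | ⟨tk, e, hconcat⟩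
    · exact absurd rfl (hnil ▸ hne₁)
    rw [List.concat_eq_append] at hconcat
    subst hconcat
    have htk : tk <+: t := (List.prefix_append tk [e]).trans hpre₁
    have hlentk : tk.length < Nat.find hex := by
      rw [← hlen₁]; simp
    have heqk : D₂.run (D.init, D.th0) tk = D.run (D.init, D.th0) tk :=
      hmin tk htk hlentk
    set s := D.run (D.init, D.th0) tk with hs
    have hstep_ne : D₂.step s e ≠ D.step s e := by
      intro h
      apply hne₁
      rw [run_concat, run_concat, heqk, h]
    -- extract the offending transition
    have hkeep : ¬ ∀ d ∈ D.delta, d.src = s.1 → d.ev = e → d.cond s.2 = true →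
        d ∈ D₂.delta := fun hk => hstep_ne (step_eq_of_keep hdet hsub s e hk)
    push_neg at hkeep
    obtain ⟨d, hd, hsrc, hev, hcond, hnotin⟩ := hkeep
    have hnotuse : ¬ (D.Useful d.src ∧ D.Useful d.tgt) := fun hu => hnotin ⟨hd, hu⟩
    have hreachq : D.Reach D.init s.1 :=
      ⟨tk, D.run_fst_mem_approxRun tk {D.init} _ rfl⟩
    have happrox : D.ApproxStep s.1 e d.tgt :=
      Or.inl ⟨d, hd, hsrc, hev, rfl, fun hall => by
        rw [hall s.2] at hcond; exact Bool.false_ne_true hcond⟩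
    have hnb : ¬ ∃ q' ∈ D.bad, D.Reach s.1 q' := by
      intro hb
      apply hnotuse
      have hBA : D.BadAfter d.src := by
        rw [hsrc]; exact ⟨hreachq, hb⟩
      refine ⟨Or.inl hBA, ?_⟩
      by_cases hBt : D.BadAfter d.tgt
      · exact Or.inl hBt
      · exact Or.inr ⟨hBt, d.src, e, hBA, by rw [hsrc]; exact happrox⟩
    -- bad-hitting coincides on all prefixes
    have key : ∀ t' : List E, t' <+: t →
        ((D₂.run (D.init, D.th0) t').1 ∈ D.bad ↔ (D.run (D.init, D.th0) t').1 ∈ D.bad) := by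
      intro t' ht'
      rcases lt_or_ge t'.length (Nat.find hex) with hlt | hge
      · rw [hmin t' ht' hlt]
      · have hpre : tk ++ [e] <+: t' :=
          List.prefix_of_prefix_length_le hpre₁ ht' (by rw [hlen₁]; exact hge)
        obtain ⟨r, hr⟩ := hpre
        have hr' : t' = tk ++ (e :: r) := by rw [← hr]; simp
        have hD : (D.run (D.init, D.th0) t').1 ∉ D.bad := by
          rw [hr', run_append, ← hs]
          intro hmem
          exact hnb ⟨_, hmem, reach_run_fst (le_refl D.delta) (e :: r) s⟩
        have hD₂ : (D₂.run (D.init, D.th0) t').1 ∉ D.bad := by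
          rw [hr', run_append, heqk]
          intro hmem
          exact hnb ⟨_, hmem, reach_run_fst hsub (e :: r) s⟩
        simp [hD, hD₂]
    constructor <;> intro h t' ht'
    · have := h t' ht'
      rw [hinit, hth0] at this
      exact fun hmem => this ((key t' ht').mpr hmem)
    · have := h t' ht'
      rw [hinit, hth0]
      exact fun hmem => this ((key t' ht').mp hmem)

lemma residual2_sat_iff {α : Type*} {D : DATE Q E Θ} (hdet : D.Deterministic)
    {P : SProg α E} {t : List E} (ht : t ∈ P.projAll) :
    DATE.Sat t (D.residual2 P) ↔ DATE.Sat t D := by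
  set D₁ := D.restrict {d | ∃ u ∈ P.projAll, D.Uses u d} with hD₁
  have hdet₁ : D₁.Deterministic := det_of_subset Set.inter_subset_left hdet
  have h2 : DATE.Sat t D₁ ↔ DATE.Sat t D := by
    constructor <;> intro h t' ht'
    · have := h t' ht'
      rw [show D₁.init = D.init from rfl, show D₁.th0 = D.th0 from rfl,
        restrictUses_run_eq hdet ht t' ht'] at this
      exact this
    · have := h t' ht'
      rw [show D₁.init = D.init from rfl, show D₁.th0 = D.th0 from rfl,
        restrictUses_run_eq hdet ht t' ht']
      exact this
  exact (reachReduce_sat_iff hdet₁ t).trans h2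

lemma residual2_delta_subset {α : Type*} (D : DATE Q E Θ) (P : SProg α E) :
    (D.residual2 P).delta ⊆ D.delta := fun d hd => hd.1.1

end DATE

end Aux

/-- Consecutively applying the flow-sensitive residual
construction along a finite list of static program over-approximations yields
a DATE equivalent to the original with respect to the intersection of the
projections of the approximations onto ground traces. -/
theorem residual2List_equiv {α Q E Θ : Type*} (D : DATE Q E Θ)
    (hdet : D.Deterministic) (Ps : List (SProg α E)) :
    DATE.EquivOn (⋂ i : Fin Ps.length, (Ps.get i).projAll)
      (D.residual2List Ps) D := by
  induction Ps generalizing D with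
  | nil => exact fun t _ => Iff.rfl
  | cons P Ps ih =>
      intro t ht
      have htP : t ∈ P.projAll :=
        Set.mem_iInter.mp ht ⟨0, Nat.succ_pos _⟩
      have htPs : t ∈ ⋂ i : Fin Ps.length, (Ps.get i).projAll :=
        Set.mem_iInter.mpr fun i =>
          Set.mem_iInter.mp ht ⟨i.1 + 1, Nat.succ_lt_succ i.2⟩
      have hdet' : (D.residual2 P).Deterministic :=
        DATE.det_of_subset (DATE.residual2_delta_subset D P) hdet
      show DATE.Sat t ((D.residual2 P).residual2List Ps) ↔ DATE.Sat t D
      exact (ih (D.residual2 P) hdet' t htPs).trans (DATE.residual2_sat_iff hdet htP)
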